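/- Let G be a simple graph on a finite vertex set X and suppose there exists an entanglement-assisted zero-error protocol with m ≥ 1 messages for G. Then there exist a complex inner product space H, a unit vector w ∈ H, and vectors w_x^i ∈ H for x ∈ X and i ∈ {1,…,m} satisfying: (1) ∑_{x∈X} w_x^i = w for every i; (2) ⟨w_x^i, w_{x'}^i⟩ = 0 for every i and all x ≠ x'; (3) ⟨w_x^i, w_{x'}^j⟩ = 0 for every edge {x,x'} of G and all i,j; (4) ⟨w_x^i, w_x^j⟩ = 0 for every x and all i ≠ j. (In particular α*(G) ≤ β(G).) -/

import Mathlib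

open Matrix Kronecker
open scoped BigOperators ComplexOrder InnerProductSpace

section Aux

variable {n : Type*} [Fintype n] [DecidableEq n]

lemma kronT (A B : Matrix n n ℂ) : (A ⊗ₖ B)ᴴ = Aᴴ ⊗ₖ Bᴴ := by
  ext ⟨i, j⟩ ⟨k, l⟩
  simp [conjTranspose_apply, kroneckerMap_apply, mul_comm]

lemma kronPSD {A B : Matrix n n ℂ} (hA : A.PosSemidef) (hB : B.PosSemidef) :
    (A ⊗ₖ B).PosSemidef := by
  exact hA.kronecker hB

lemma sumMulVec {κ : Type*} {ι : Type*} [Fintype κ] (s : Finset ι) (M : ι → Matrix κ κ ℂ)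
    (v : κ → ℂ) : (∑ j ∈ s, M j) *ᵥ v = ∑ j ∈ s, M j *ᵥ v := by
  ext k
  simp [Matrix.mulVec, dotProduct, Matrix.sum_apply, Finset.sum_mul]
  rw [Finset.sum_comm]

lemma sumKron {ι : Type*} (s : Finset ι) (A : Matrix n n ℂ)
    (B : ι → Matrix n n ℂ) :
    A ⊗ₖ (∑ j ∈ s, B j) = ∑ j ∈ s, A ⊗ₖ B j := by
  ext ⟨i, j⟩ ⟨k, l⟩
  simp [kroneckerMap_apply, Matrix.sum_apply, Finset.mul_sum]

lemma kronSum {ι : Type*} (s : Finset ι) (A : ι → Matrix n n ℂ)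
    (B : Matrix n n ℂ) :
    (∑ j ∈ s, A j) ⊗ₖ B = ∑ j ∈ s, A j ⊗ₖ B := by
  ext ⟨i, j⟩ ⟨k, l⟩
  simp [kroneckerMap_apply, Matrix.sum_apply, Finset.sum_mul]

lemma dotFact {κ : Type*} [Fintype κ] (ψ : κ → ℂ) (M N : Matrix κ κ ℂ) :
    star ψ ⬝ᵥ ((Mᴴ * N) *ᵥ ψ) = star (M *ᵥ ψ) ⬝ᵥ (N *ᵥ ψ) := by
  rw [star_mulVec, ← Matrix.dotProduct_mulVec, mulVec_mulVec]

lemma orthStep (ψ : n × n → ℂ) (A B : Matrix n n ℂ) (hA : Aᴴ = A)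
    (hAB : A * B = 0) :
    star ψ ⬝ᵥ (((A ⊗ₖ (1 : Matrix n n ℂ))ᴴ * (B ⊗ₖ 1)) *ᵥ ψ) = 0 := by
  rw [kronT, conjTranspose_one, hA, ← mul_kronecker_mul, hAB, one_mul,
    zero_kronecker, Matrix.zero_mulVec, dotProduct_zero]

lemma mainStep {m : ℕ} (ψ : n × n → ℂ) (A B : Matrix n n ℂ)
    (R : Fin m → Matrix n n ℂ) (j0 : Fin m)
    (hA : A.PosSemidef) (hB : B.PosSemidef) (hR : ∀ j, (R j).PosSemidef)
    (hRsum : ∑ j, R j = 1)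
    (hAz : star ψ ⬝ᵥ ((A ⊗ₖ R j0) *ᵥ ψ) = 0)
    (hBz : ∀ j, j ≠ j0 → star ψ ⬝ᵥ ((B ⊗ₖ R j) *ᵥ ψ) = 0) :
    star ψ ⬝ᵥ (((A ⊗ₖ (1 : Matrix n n ℂ))ᴴ * (B ⊗ₖ 1)) *ᵥ ψ) = 0 := by
  have hAv : (A ⊗ₖ R j0) *ᵥ ψ = 0 :=
    ((kronPSD hA (hR j0)).dotProduct_mulVec_zero_iff ψ).mp hAz
  have hBv : ∀ j, j ≠ j0 → (B ⊗ₖ R j) *ᵥ ψ = 0 := fun j hj =>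
    ((kronPSD hB (hR j)).dotProduct_mulVec_zero_iff ψ).mp (hBz j hj)
  have hcol : (B ⊗ₖ (1 : Matrix n n ℂ)) *ᵥ ψ = (B ⊗ₖ R j0) *ᵥ ψ := by
    rw [← hRsum, sumKron, sumMulVec]
    exact Finset.sum_eq_single j0 (fun j _ hj => hBv j hj) (by simp)
  have hid : (A ⊗ₖ (1 : Matrix n n ℂ))ᴴ * (B ⊗ₖ R j0)
      = (A ⊗ₖ R j0)ᴴ * (B ⊗ₖ (1 : Matrix n n ℂ)) := by
    rw [kronT, kronT, conjTranspose_one, hA.1, (hR j0).1, ← mul_kronecker_mul,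
      ← mul_kronecker_mul, one_mul, mul_one]
  calc star ψ ⬝ᵥ (((A ⊗ₖ (1 : Matrix n n ℂ))ᴴ * (B ⊗ₖ 1)) *ᵥ ψ)
      = star ((A ⊗ₖ (1 : Matrix n n ℂ)) *ᵥ ψ) ⬝ᵥ ((B ⊗ₖ (1 : Matrix n n ℂ)) *ᵥ ψ) :=
        dotFact ψ _ _
    _ = star ((A ⊗ₖ (1 : Matrix n n ℂ)) *ᵥ ψ) ⬝ᵥ ((B ⊗ₖ R j0) *ᵥ ψ) := by rw [hcol]
    _ = star ψ ⬝ᵥ (((A ⊗ₖ (1 : Matrix n n ℂ))ᴴ * (B ⊗ₖ R j0)) *ᵥ ψ) := (dotFact ψ _ _).symm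
    _ = star ψ ⬝ᵥ (((A ⊗ₖ R j0)ᴴ * (B ⊗ₖ (1 : Matrix n n ℂ))) *ᵥ ψ) := by rw [hid]
    _ = star ((A ⊗ₖ R j0) *ᵥ ψ) ⬝ᵥ ((B ⊗ₖ (1 : Matrix n n ℂ)) *ᵥ ψ) := dotFact ψ _ _
    _ = 0 := by rw [hAv]; simp

end Aux

/-- If a graph `G` admits an entanglement-assisted zero-error protocol with `m ≥ 1`
messages, then there exist a complex inner product space `H`, a unit vector `w`, and
vectors `w_x^i` satisfying conditions (1)-(4); in particular `α*(G) ≤ β(G)`. -/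
theorem beta_bound_of_protocol
    {X : Type} [Fintype X] [DecidableEq X] (G : SimpleGraph X)
    (m d : ℕ) (hm : 1 ≤ m) (hd : 1 ≤ d)
    -- the shared bipartite state
    (ψ : Fin d × Fin d → ℂ) (hψ : star ψ ⬝ᵥ ψ = 1)
    -- Alice's projective measurements, one for each message `i`
    (P : Fin m → X → Matrix (Fin d) (Fin d) ℂ)
    (hPherm : ∀ i x, (P i x).IsHermitian)
    (hPidem : ∀ i x, P i x * P i x = P i x)
    (hPorth : ∀ i x x', x ≠ x' → P i x * P i x' = 0)
    (hPsum : ∀ i, ∑ x, P i x = 1)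
    -- Bob's POVMs, one for each edge `{x, x'}` of `G`
    (Q : X → X → Fin m → Matrix (Fin d) (Fin d) ℂ)
    (hQsymm : ∀ x x', G.Adj x x' → ∀ j, Q x x' j = Q x' x j)
    (hQpsd : ∀ x x', G.Adj x x' → ∀ j, (Q x x' j).PosSemidef)
    (hQsum : ∀ x x', G.Adj x x' → ∑ j, Q x x' j = 1)
    -- Bob's POVMs for isolated vertices
    (Q0 : X → Fin m → Matrix (Fin d) (Fin d) ℂ)
    (hQ0psd : ∀ x, (∀ y, ¬ G.Adj x y) → ∀ j, (Q0 x j).PosSemidef)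
    (hQ0sum : ∀ x, (∀ y, ¬ G.Adj x y) → ∑ j, Q0 x j = 1)
    -- zero-error (correct decoding) conditions
    (hzero : ∀ x x', G.Adj x x' → ∀ i j,
      star ψ ⬝ᵥ ((P i x ⊗ₖ Q x x' j) *ᵥ ψ) = if i = j then 1 else 0)
    (hzero0 : ∀ x, (∀ y, ¬ G.Adj x y) → ∀ i j,
      star ψ ⬝ᵥ ((P i x ⊗ₖ Q0 x j) *ᵥ ψ) = if i = j then 1 else 0) :
    ∃ (H : Type) (_ : NormedAddCommGroup H) (_ : InnerProductSpace ℂ H)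
      (w : H) (wv : X → Fin m → H),
      ‖w‖ = 1 ∧
      -- (1)
      (∀ i, ∑ x, wv x i = w) ∧
      -- (2)
      (∀ i x x', x ≠ x' → ⟪wv x i, wv x' i⟫_ℂ = 0) ∧
      -- (3)
      (∀ x x', G.Adj x x' → ∀ i j, ⟪wv x i, wv x' j⟫_ℂ = 0) ∧
      -- (4)
      (∀ x i j, i ≠ j → ⟪wv x i, wv x j⟫_ℂ = 0) := by
  classical
  set e : (Fin d × Fin d → ℂ) ≃ (EuclideanSpace ℂ (Fin d × Fin d)) :=
    (WithLp.equiv 2 (Fin d × Fin d → ℂ)).symm with he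
  have key : ∀ A B : Matrix (Fin d × Fin d) (Fin d × Fin d) ℂ,
      ⟪e (A *ᵥ ψ), e (B *ᵥ ψ)⟫_ℂ = star ψ ⬝ᵥ ((Aᴴ * B) *ᵥ ψ) := by
    intro A B
    rw [he, WithLp.equiv_symm_apply, EuclideanSpace.inner_toLp_toLp, dotProduct_comm, dotFact]
  have Ppsd : ∀ i x, (P i x).PosSemidef := by
    intro i x
    have h := posSemidef_conjTranspose_mul_self (P i x)
    rwa [hPherm i x, hPidem i x] at h
  refine ⟨EuclideanSpace ℂ (Fin d × Fin d), inferInstance, inferInstance, e ψ,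
    fun x i => e ((P i x ⊗ₖ (1 : Matrix (Fin d) (Fin d) ℂ)) *ᵥ ψ), ?_, ?_, ?_, ?_, ?_⟩
  · -- norm
    have h1 : ⟪e ψ, e ψ⟫_ℂ = 1 := by
      rw [he, WithLp.equiv_symm_apply, EuclideanSpace.inner_toLp_toLp, dotProduct_comm]; exact hψ
    have h3 : ‖e ψ‖ ^ 2 = 1 := by
      rw [← inner_self_eq_norm_sq (𝕜 := ℂ) (e ψ), h1]
      simp
    nlinarith [norm_nonneg (e ψ)]
  · -- (1)
    intro i
    have : ∑ x, e ((P i x ⊗ₖ (1 : Matrix (Fin d) (Fin d) ℂ)) *ᵥ ψ)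
        = e (∑ x, (P i x ⊗ₖ (1 : Matrix (Fin d) (Fin d) ℂ)) *ᵥ ψ) := by
      rw [he, WithLp.equiv_symm_apply, WithLp.toLp_sum]
    rw [this, ← sumMulVec, ← kronSum, hPsum, one_kronecker_one, one_mulVec]
  · -- (2)
    intro i x x' hne
    rw [key]
    exact orthStep ψ _ _ (hPherm i x) (hPorth i x x' hne)
  · -- (3)
    intro x x' hadj i j
    rw [key]
    rcases eq_or_ne i j with rfl | hij
    · exact orthStep ψ _ _ (hPherm i x) (hPorth i x x' hadj.ne)
    · refine mainStep ψ (P i x) (P j x') (Q x x') j (Ppsd i x) (Ppsd j x')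
        (hQpsd x x' hadj) (hQsum x x' hadj) ?_ ?_
      · rw [hzero x x' hadj i j, if_neg hij]
      · intro k hk
        rw [hQsymm x x' hadj k, hzero x' x hadj.symm j k, if_neg (Ne.symm hk)]
  · -- (4)
    intro x i j hij
    rw [key]
    by_cases hx : ∃ y, G.Adj x y
    · obtain ⟨y, hy⟩ := hx
      refine mainStep ψ (P i x) (P j x) (Q x y) j (Ppsd i x) (Ppsd j x)
        (hQpsd x y hy) (hQsum x y hy) ?_ ?_
      · rw [hzero x y hy i j, if_neg hij]
      · intro k hk
        rw [hzero x y hy j k, if_neg (Ne.symm hk)]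
    · have hx' : ∀ y, ¬ G.Adj x y := fun y hy => hx ⟨y, hy⟩
      refine mainStep ψ (P i x) (P j x) (Q0 x) j (Ppsd i x) (Ppsd j x)
        (hQ0psd x hx') (hQ0sum x hx') ?_ ?_
      · rw [hzero0 x hx' i j, if_neg hij]
      · intro k hk
        rw [hzero0 x hx' j k, if_neg (Ne.symm hk)]
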